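/- Let R be a prime k-algebra that is rational (i.e., its extended centroid equals k) and let K/k be a field extension. Then R ⊗_k K is a prime K-algebra that is K-rational, i.e., the extended centroid of R ⊗_k K equals K. -/

import Mathlib

open TensorProduct

/-- `f` restricts to an `(R,R)`-bimodule map on the two-sided ideal `I`. -/
def IsBimodOn {R : Type*} [Ring R] (I : TwoSidedIdeal R) (f : R → R) : Prop :=
  (∀ x ∈ I, ∀ y ∈ I, f (x + y) = f x + f y) ∧
  (∀ r : R, ∀ x ∈ I, f (r * x) = r * f x) ∧
  (∀ r : R, ∀ x ∈ I, f (x * r) = f x * r)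

/-- A ring is prime if it is nonzero and the product of any two nonzero two-sided
ideals is nonzero. -/
def IsPrimeRing (T : Type*) [Ring T] : Prop :=
  Nontrivial T ∧
    ∀ A B : TwoSidedIdeal T, A ≠ ⊥ → B ≠ ⊥ → ∃ a ∈ A, ∃ b ∈ B, a * b ≠ 0

namespace RatExt

variable {T : Type*} [Ring T]

/-- the set of products `p * a * q`. -/
def genSet (a : T) : Set T := {x | ∃ p q : T, x = p * a * q}

/-- the two-sided ideal generated by `a`. -/
def genIdeal (a : T) : TwoSidedIdeal T :=
  TwoSidedIdeal.mk' (AddSubgroup.closure (genSet a) : Set T)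
    (AddSubgroup.zero_mem _)
    (fun hx hy => AddSubgroup.add_mem _ hx hy)
    (fun hx => AddSubgroup.neg_mem _ hx)
    (fun {x y} hy => by
      refine AddSubgroup.closure_induction
        (fun z hz => ?_) (by simpa using AddSubgroup.zero_mem _)
        (fun z w _ _ hz hw => by simpa [mul_add] using AddSubgroup.add_mem _ hz hw)
        (fun z _ hz => by simpa [mul_neg] using AddSubgroup.neg_mem _ hz) hy
      obtain ⟨p, q, rfl⟩ := hz
      exact AddSubgroup.subset_closure ⟨x * p, q, by simp [mul_assoc]⟩)
    (fun {x y} hx => by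
      refine AddSubgroup.closure_induction
        (fun z hz => ?_) (by simpa using AddSubgroup.zero_mem _)
        (fun z w _ _ hz hw => by simpa [add_mul] using AddSubgroup.add_mem _ hz hw)
        (fun z _ hz => by simpa [neg_mul] using AddSubgroup.neg_mem _ hz) hx
      obtain ⟨p, q, rfl⟩ := hz
      exact AddSubgroup.subset_closure ⟨p, q * y, by simp [mul_assoc]⟩)

lemma mem_genIdeal {a x : T} :
    x ∈ genIdeal a ↔ x ∈ AddSubgroup.closure (genSet a) := by
  simp [genIdeal]

lemma self_mem_genIdeal (a : T) : a ∈ genIdeal a :=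
  mem_genIdeal.2 <| AddSubgroup.subset_closure ⟨1, 1, by simp⟩

lemma mul_mem_genIdeal (a p q : T) : p * a * q ∈ genIdeal a :=
  mem_genIdeal.2 <| AddSubgroup.subset_closure ⟨p, q, rfl⟩

lemma genIdeal_ne_bot {a : T} (ha : a ≠ 0) : genIdeal a ≠ ⊥ := fun h => by
  have := self_mem_genIdeal a
  rw [h, TwoSidedIdeal.mem_bot] at this
  exact ha this

/-- In a prime ring, two nonzero elements have a nonzero sandwich product. -/
lemma exists_mid (hp : IsPrimeRing T) {a b : T} (ha : a ≠ 0) (hb : b ≠ 0) :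
    ∃ s, a * s * b ≠ 0 := by
  by_contra h
  push_neg at h
  obtain ⟨x, hx, y, hy, hxy⟩ := hp.2 (genIdeal a) (genIdeal b)
    (genIdeal_ne_bot ha) (genIdeal_ne_bot hb)
  refine hxy ?_
  rw [mem_genIdeal] at hx hy
  have key : ∀ y ∈ AddSubgroup.closure (genSet b), ∀ x ∈ AddSubgroup.closure (genSet a),
      x * y = 0 := by
    intro y hy
    refine AddSubgroup.closure_induction (fun z hz => ?_)
      (fun x _ => by simp) (fun z w _ _ hz hw x hx => by
        rw [mul_add, hz x hx, hw x hx, add_zero])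
      (fun z _ hz x hx => by rw [mul_neg, hz x hx, neg_zero]) hy
    obtain ⟨u, v, rfl⟩ := hz
    intro x hx
    refine AddSubgroup.closure_induction (fun w hw => ?_)
      (by simp) (fun z w _ _ hz hw => by rw [add_mul, hz, hw, add_zero])
      (fun z _ hz => by rw [neg_mul, hz, neg_zero]) hx
    obtain ⟨p, q, rfl⟩ := hw
    have : p * (a * (q * u) * b) * v = p * a * q * (u * b * v) := by
      simp [mul_assoc]
    rw [← this, h (q * u), mul_zero, zero_mul]
  exact key y hy x hx


section field

variable {k : Type*} [Field k] {R : Type*} [Ring R] [Algebra k R]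

/-- Core lemma: if `a * s * b = b * s * a` for all `s`, with `a ≠ 0`, then `b = c • a`
for some scalar `c` in `k` (the extended centroid hypothesis `hrat`). -/
lemma comm_rel_smul
    (hprime : IsPrimeRing R)
    (hrat : ∀ I : TwoSidedIdeal R, (∀ r : R, (∀ x ∈ I, r * x = 0) → r = 0) →
      ∀ f : R → R, IsBimodOn I f → ∃ c : k, ∀ x ∈ I, f x = c • x)
    {a b : R} (ha : a ≠ 0) (hab : ∀ s, a * s * b = b * s * a) :
    ∃ c : k, b = c • a := by
  classical
  set J := genIdeal a with hJ
  have hJann : ∀ r : R, (∀ x ∈ J, r * x = 0) → r = 0 := by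
    intro r hr
    by_contra hr0
    obtain ⟨s, hs⟩ := exists_mid hprime hr0 ha
    refine hs ?_
    have h1 := hr (s * a * 1) (mul_mem_genIdeal a s 1)
    rw [mul_one] at h1
    rw [mul_assoc]
    exact h1
  set P : R → R → Prop := fun x u => ∀ s z : R, u * s * a * z = x * s * b * z with hP
  have huniq : ∀ x u u', P x u → P x u' → u = u' := by
    intro x u u' hu hu'
    by_contra hne
    obtain ⟨s, hs⟩ := exists_mid hprime (sub_ne_zero.2 hne) ha
    refine hs ?_
    have := hu s 1
    have h2 := hu' s 1
    rw [mul_one] at this h2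
    rw [sub_mul, sub_mul, this, h2, sub_self]
  have hex : ∀ x ∈ J, ∃ u, P x u := by
    intro x hx
    rw [mem_genIdeal] at hx
    refine AddSubgroup.closure_induction (fun z hz => ?_)
      (⟨0, fun s z => by simp⟩)
      (fun z w _ _ ⟨u, hu⟩ ⟨v, hv⟩ => ⟨u + v, fun s t => by
        rw [add_mul, add_mul, add_mul, hu, hv, ← add_mul, ← add_mul, ← add_mul]⟩)
      (fun z _ ⟨u, hu⟩ => ⟨-u, fun s t => by
        rw [neg_mul, neg_mul, neg_mul, hu, ← neg_mul, ← neg_mul, ← neg_mul]⟩) hx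
    obtain ⟨p, q, rfl⟩ := hz
    refine ⟨p * b * q, fun s z => ?_⟩
    have h1 : p * b * q * s * a * z = p * (b * (q * s) * a) * z := by simp [mul_assoc]
    have h2 : p * a * q * s * b * z = p * (a * (q * s) * b) * z := by simp [mul_assoc]
    rw [h1, h2, ← hab]
  set f : R → R := fun x => if h : ∃ u, P x u then h.choose else 0 with hfdef
  have hf : ∀ x u, P x u → f x = u := by
    intro x u h
    have h' : ∃ u, P x u := ⟨u, h⟩
    simp only [hfdef, dif_pos h']
    exact huniq x _ _ h'.choose_spec h
  have hfP : ∀ x ∈ J, P x (f x) := by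
    intro x hx
    obtain ⟨u, hu⟩ := hex x hx
    rw [hf x u hu]; exact hu
  have hbimod : IsBimodOn J f := by
    refine ⟨fun x hx y hy => ?_, fun r x hx => ?_, fun r x hx => ?_⟩
    · refine hf _ _ (fun s z => ?_)
      rw [add_mul, add_mul, add_mul, hfP x hx s z, hfP y hy s z, ← add_mul, ← add_mul,
        ← add_mul]
    · refine hf _ _ (fun s z => ?_)
      have := hfP x hx s z
      calc r * f x * s * a * z = r * (f x * s * a * z) := by simp [mul_assoc]
        _ = r * (x * s * b * z) := by rw [this]
        _ = r * x * s * b * z := by simp [mul_assoc]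
    · refine hf _ _ (fun s z => ?_)
      have := hfP x hx (r * s) z
      calc f x * r * s * a * z = f x * (r * s) * a * z := by simp [mul_assoc]
        _ = x * (r * s) * b * z := this
        _ = x * r * s * b * z := by simp [mul_assoc]
  obtain ⟨c, hc⟩ := hrat J hJann f hbimod
  have hfa : f a = b := hf a b (fun s z => by rw [hab])
  exact ⟨c, by rw [← hfa, hc a (self_mem_genIdeal a)]⟩

/-- Martindale's lemma: if `∑ aₗ r bₗ = 0` for all `r` with the `bₗ` linearly
independent over `k`, then all `aₗ = 0`. -/
lemma martindale
    (hprime : IsPrimeRing R)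
    (hrat : ∀ I : TwoSidedIdeal R, (∀ r : R, (∀ x ∈ I, r * x = 0) → r = 0) →
      ∀ f : R → R, IsBimodOn I f → ∃ c : k, ∀ x ∈ I, f x = c • x)
    {ι : Type*} [DecidableEq ι] (s : Finset ι) :
    ∀ (a b : ι → R),
    (∀ c : ι → k, (∑ l ∈ s, c l • b l) = 0 → ∀ l ∈ s, c l = 0) →
    (∀ r : R, ∑ l ∈ s, a l * r * b l = 0) → ∀ l ∈ s, a l = 0 := by
  classical
  induction s using Finset.strongInduction with
  | _ s ih =>
  intro a b hb hrel l₀ hl₀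
  by_contra ha0
  set t := s.erase l₀ with ht
  have htsub : t ⊂ s := Finset.erase_ssubset hl₀
  -- derived relation
  have hder : ∀ r x : R,
      ∑ l ∈ t, (a l₀ * r * a l - a l * r * a l₀) * x * b l = 0 := by
    intro r x
    have E1 : ∑ l ∈ s, a l₀ * r * (a l * x * b l) = 0 := by
      rw [← Finset.mul_sum, hrel x, mul_zero]
    have E2 : ∑ l ∈ s, a l * (r * a l₀ * x) * b l = 0 := hrel (r * a l₀ * x)
    have hs0 : ∑ l ∈ s, (a l₀ * r * a l - a l * r * a l₀) * x * b l = 0 := by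
      have : ∀ l, (a l₀ * r * a l - a l * r * a l₀) * x * b l
          = a l₀ * r * (a l * x * b l) - a l * (r * a l₀ * x) * b l := by
        intro l; simp [sub_mul, mul_assoc]
      simp only [this, Finset.sum_sub_distrib, E1, E2, sub_zero]
    have := Finset.add_sum_erase s
      (fun l => (a l₀ * r * a l - a l * r * a l₀) * x * b l) hl₀
    rw [← ht] at this
    rw [← this] at hs0
    simpa using hs0
  have hbt : ∀ c : ι → k, (∑ l ∈ t, c l • b l) = 0 → ∀ l ∈ t, c l = 0 := by
    intro c hc l hl
    have h2 : ∑ l ∈ t, Function.update c l₀ 0 l • b l = ∑ l ∈ t, c l • b l :=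
      Finset.sum_congr rfl fun l hl => by
        rw [Function.update_of_ne (Finset.ne_of_mem_erase hl)]
    have h1 : ∑ l ∈ s, Function.update c l₀ 0 l • b l = 0 := by
      rw [← Finset.add_sum_erase s _ hl₀, ← ht, Function.update_self, zero_smul, zero_add,
        h2, hc]
    have := hb _ h1 l (Finset.mem_of_mem_erase hl)
    rwa [Function.update_of_ne (Finset.ne_of_mem_erase hl)] at this
  have hcomm : ∀ l ∈ t, ∀ r : R, a l₀ * r * a l = a l * r * a l₀ := by
    intro l hl r
    have := ih t htsub (fun l => a l₀ * r * a l - a l * r * a l₀) b hbt (hder r) l hl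
    linear_combination (norm := noncomm_ring) this
  have hsc : ∀ l ∈ t, ∃ c : k, a l = c • a l₀ := fun l hl =>
    comm_rel_smul hprime hrat ha0 (hcomm l hl)
  choose! c hc using hsc
  set w : R := b l₀ + ∑ l ∈ t, c l • b l with hw
  have hw0 : w ≠ 0 := by
    intro h0
    have h2 : ∑ l ∈ t, Function.update c l₀ (1 : k) l • b l = ∑ l ∈ t, c l • b l :=
      Finset.sum_congr rfl fun l hl => by
        rw [Function.update_of_ne (Finset.ne_of_mem_erase hl)]
    have h1 : ∑ l ∈ s, Function.update c l₀ (1 : k) l • b l = 0 := by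
      rw [← Finset.add_sum_erase s _ hl₀, ← ht, Function.update_self, one_smul, h2, ← hw, h0]
    have := hb _ h1 l₀ hl₀
    rw [Function.update_self] at this
    exact one_ne_zero this
  have hfinal : ∀ x : R, a l₀ * x * w = 0 := by
    intro x
    have : ∑ l ∈ s, a l * x * b l = 0 := hrel x
    rw [← Finset.add_sum_erase s _ hl₀, ← ht] at this
    have h2 : ∑ l ∈ t, a l * x * b l = ∑ l ∈ t, c l • (a l₀ * x * b l) := by
      refine Finset.sum_congr rfl fun l hl => ?_
      rw [hc l hl, smul_mul_assoc, smul_mul_assoc]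
    rw [h2] at this
    rw [hw, mul_add, Finset.mul_sum]
    rw [← this]
    congr 1
    exact Finset.sum_congr rfl fun l hl => by rw [mul_smul_comm]
  obtain ⟨x, hx⟩ := exists_mid hprime ha0 hw0
  exact hx (hfinal x)

end field

section tensor

variable {k : Type*} [Field k] {R : Type*} [Ring R] [Algebra k R]
  {K : Type*} [Field K] [Algebra k K]
variable {ι κ : Type*} (bG : Module.Basis ι k R) (bE : Module.Basis κ k K)

/-- left coordinate map on the tensor product. -/
noncomputable def Phi (l : ι) : R ⊗[k] K →ₗ[k] K :=
  (TensorProduct.lid k K).toLinearMap ∘ₗ LinearMap.rTensor K (bG.coord l)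

@[simp] lemma Phi_tmul (l : ι) (x : R) (lam : K) :
    Phi bG l (x ⊗ₜ[k] lam) = bG.repr x l • lam := by
  simp [Phi, Module.Basis.coord_apply]

/-- right coordinate map on the tensor product. -/
noncomputable def Psi (t : κ) : R ⊗[k] K →ₗ[k] R :=
  (TensorProduct.rid k R).toLinearMap ∘ₗ LinearMap.lTensor R (bE.coord t)

@[simp] lemma Psi_tmul (t : κ) (x : R) (lam : K) :
    Psi bE t (x ⊗ₜ[k] lam) = bE.repr lam t • x := by
  simp [Psi, Module.Basis.coord_apply]

lemma exists_rep (u : R ⊗[k] K) :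
    ∃ s : Finset ι, (∀ l ∉ s, Phi bG l u = 0) ∧ u = ∑ l ∈ s, bG l ⊗ₜ[k] Phi bG l u := by
  classical
  induction u using TensorProduct.induction_on with
  | zero => exact ⟨∅, fun l _ => by simp, by simp⟩
  | tmul x lam =>
    refine ⟨(bG.repr x).support, fun l hl => ?_, ?_⟩
    · simp [Finsupp.notMem_support_iff.1 hl]
    · have hx : ∑ l ∈ (bG.repr x).support, bG.repr x l • bG l = x := by
        conv_rhs => rw [← bG.linearCombination_repr x]
        rw [Finsupp.linearCombination_apply, Finsupp.sum]
      calc x ⊗ₜ[k] lam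
          = (∑ l ∈ (bG.repr x).support, bG.repr x l • bG l) ⊗ₜ[k] lam := by rw [hx]
        _ = ∑ l ∈ (bG.repr x).support, bG l ⊗ₜ[k] (bG.repr x l • lam) := by
            rw [sum_tmul]
            exact Finset.sum_congr rfl fun l _ => by rw [smul_tmul, tmul_smul]
        _ = ∑ l ∈ (bG.repr x).support, bG l ⊗ₜ[k] Phi bG l (x ⊗ₜ[k] lam) := by
            exact Finset.sum_congr rfl fun l _ => by rw [Phi_tmul]
  | add u v hu hv =>
    obtain ⟨su, hu0, hurep⟩ := hu
    obtain ⟨sv, hv0, hvrep⟩ := hv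
    refine ⟨su ∪ sv, fun l hl => ?_, ?_⟩
    · rw [map_add, hu0 l (fun h => hl (Finset.mem_union_left _ h)),
        hv0 l (fun h => hl (Finset.mem_union_right _ h)), add_zero]
    · have h1 : u = ∑ l ∈ su ∪ sv, bG l ⊗ₜ[k] Phi bG l u := by
        conv_lhs => rw [hurep]
        exact Finset.sum_subset Finset.subset_union_left fun l _ hl => by
          rw [hu0 l hl, tmul_zero]
      have h2 : v = ∑ l ∈ su ∪ sv, bG l ⊗ₜ[k] Phi bG l v := by
        conv_lhs => rw [hvrep]
        exact Finset.sum_subset Finset.subset_union_right fun l _ hl => by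
          rw [hv0 l hl, tmul_zero]
      calc u + v = ∑ l ∈ su ∪ sv, (bG l ⊗ₜ[k] Phi bG l u + bG l ⊗ₜ[k] Phi bG l v) := by
            rw [Finset.sum_add_distrib, ← h1, ← h2]
        _ = ∑ l ∈ su ∪ sv, bG l ⊗ₜ[k] Phi bG l (u + v) := by
            exact Finset.sum_congr rfl fun l _ => by rw [map_add, tmul_add]

lemma rep_mono {u : R ⊗[k] K} {s t : Finset ι} (h0 : ∀ l ∉ s, Phi bG l u = 0)
    (hrep : u = ∑ l ∈ s, bG l ⊗ₜ[k] Phi bG l u) (hst : s ⊆ t) :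
    u = ∑ l ∈ t, bG l ⊗ₜ[k] Phi bG l u := by
  conv_lhs => rw [hrep]
  exact Finset.sum_subset hst fun l _ hl => by rw [h0 l hl, tmul_zero]

lemma basis_indepOn (s : Finset ι) (c : ι → k) (h : ∑ l ∈ s, c l • bG l = 0) :
    ∀ l ∈ s, c l = 0 := by
  classical
  intro l hl
  have h2 := congrArg (fun x => bG.repr x l) h
  simp only [map_sum, map_zero, Finsupp.coe_zero, Pi.zero_apply, Finsupp.finset_sum_apply,
    map_smul, Finsupp.smul_apply, Module.Basis.repr_self, Finsupp.single_apply, smul_eq_mul,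
    mul_ite, mul_one, mul_zero] at h2
  rwa [Finset.sum_ite_eq' s l c, if_pos hl] at h2

lemma repr_forall_zero {x : K} (h : ∀ t, bE.repr x t = 0) : x = 0 :=
  (LinearEquiv.map_eq_zero_iff bE.repr).1 (Finsupp.ext h)

lemma one_tmul_comm (mu : K) (u : R ⊗[k] K) :
    ((1 : R) ⊗ₜ[k] mu) * u = u * ((1 : R) ⊗ₜ[k] mu) := by
  induction u using TensorProduct.induction_on with
  | zero => simp
  | tmul x lam => rw [Algebra.TensorProduct.tmul_mul_tmul,
      Algebra.TensorProduct.tmul_mul_tmul, one_mul, mul_one, mul_comm]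
  | add u v hu hv => rw [mul_add, add_mul, hu, hv]

lemma one_tmul_cancel {mu : K} {u : R ⊗[k] K} (hmu : mu ≠ 0)
    (h : ((1 : R) ⊗ₜ[k] mu) * u = 0) : u = 0 := by
  have h2 : ((1:R) ⊗ₜ[k] mu⁻¹) * (((1:R) ⊗ₜ[k] mu) * u) = u := by
    rw [← mul_assoc, Algebra.TensorProduct.tmul_mul_tmul, one_mul, inv_mul_cancel₀ hmu,
      ← Algebra.TensorProduct.one_def, one_mul]
  rw [h, mul_zero] at h2
  exact h2.symm

lemma expand_mul (sa sb : Finset ι) (alf bef : ι → K) (r : R) :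
    (∑ l ∈ sa, bG l ⊗ₜ[k] alf l) * (r ⊗ₜ[k] 1) * (∑ l ∈ sb, bG l ⊗ₜ[k] bef l)
      = ∑ l ∈ sa, ∑ l' ∈ sb, (bG l * r * bG l') ⊗ₜ[k] (alf l * bef l') := by
  rw [Finset.sum_mul, Finset.sum_mul]
  refine Finset.sum_congr rfl fun l _ => ?_
  rw [Finset.mul_sum]
  refine Finset.sum_congr rfl fun l' _ => ?_
  rw [Algebra.TensorProduct.tmul_mul_tmul, Algebra.TensorProduct.tmul_mul_tmul, mul_one]

lemma double_sum_coords
    (hprime : IsPrimeRing R)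
    (hrat : ∀ I : TwoSidedIdeal R, (∀ r : R, (∀ x ∈ I, r * x = 0) → r = 0) →
      ∀ f : R → R, IsBimodOn I f → ∃ c : k, ∀ x ∈ I, f x = c • x)
    (sa sb : Finset ι) (kf : ι → ι → K)
    (h : ∀ r : R, ∑ l ∈ sa, ∑ l' ∈ sb, (bG l * r * bG l') ⊗ₜ[k] kf l l' = 0) :
    ∀ l ∈ sa, ∀ l' ∈ sb, kf l l' = 0 := by
  classical
  let bE := Module.Basis.ofVectorSpace k K
  intro l hl l' hl'
  refine repr_forall_zero bE fun t => ?_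
  have key : ∀ r : R,
      ∑ l' ∈ sb, (∑ l ∈ sa, bE.repr (kf l l') t • bG l) * r * bG l' = 0 := by
    intro r
    have h2 := congrArg (Psi bE t) (h r)
    simp only [map_sum, Psi_tmul, map_zero] at h2
    rw [Finset.sum_comm] at h2
    rw [← h2]
    refine Finset.sum_congr rfl fun l' _ => ?_
    rw [Finset.sum_mul, Finset.sum_mul]
    refine Finset.sum_congr rfl fun l _ => ?_
    rw [smul_mul_assoc, smul_mul_assoc]
  have h3 := martindale hprime hrat sb
    (fun l' => ∑ l ∈ sa, bE.repr (kf l l') t • bG l) bG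
    (fun c hc => basis_indepOn bG sb c hc) key l' hl'
  exact basis_indepOn bG sa _ h3 l hl

end tensor

lemma exists_ne_zero {T : Type*} [Ring T] {A : TwoSidedIdeal T} (hA : A ≠ ⊥) :
    ∃ a ∈ A, a ≠ 0 := by
  by_contra h
  push_neg at h
  exact hA (SetLike.ext fun x => ⟨fun hx => (TwoSidedIdeal.mem_bot T).2 (h x hx), fun hx => by
    rw [(TwoSidedIdeal.mem_bot T).1 hx]; exact A.zero_mem⟩)

section main

variable {k : Type*} [Field k] {R : Type*} [Ring R] [Algebra k R]
  {K : Type*} [Field K] [Algebra k K]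

variable (hprime : IsPrimeRing R)
  (hrat : ∀ I : TwoSidedIdeal R, (∀ r : R, (∀ x ∈ I, r * x = 0) → r = 0) →
    ∀ f : R → R, IsBimodOn I f → ∃ c : k, ∀ x ∈ I, f x = c • x)

include hprime hrat

lemma prime_tensor : IsPrimeRing (R ⊗[k] K) := by
  classical
  let bG := Module.Basis.ofVectorSpace k R
  have hntR : Nontrivial R := hprime.1
  have hnt : Nontrivial (R ⊗[k] K) := by
    let bE := Module.Basis.ofVectorSpace k K
    let bT := (Module.Basis.ofVectorSpace k R).tensorProduct bE
    obtain ⟨i⟩ := (Module.Basis.ofVectorSpace k R).index_nonempty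
    obtain ⟨j⟩ := bE.index_nonempty
    exact nontrivial_of_ne (bT (i, j)) 0 (bT.ne_zero _)
  refine ⟨hnt, fun A B hA hB => ?_⟩
  obtain ⟨a, haA, ha⟩ := exists_ne_zero hA
  obtain ⟨b, hbB, hb⟩ := exists_ne_zero hB
  by_contra hcon
  push_neg at hcon
  have hsand : ∀ s : R ⊗[k] K, a * s * b = 0 := fun s => by
    rw [mul_assoc]; exact hcon a haA _ (B.mul_mem_left s b hbB)
  obtain ⟨sa, ha0, harep⟩ := exists_rep bG a
  obtain ⟨sb, hb0, hbrep⟩ := exists_rep bG b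
  have hrel : ∀ r : R, ∑ l ∈ sa, ∑ l' ∈ sb,
      (bG l * r * bG l') ⊗ₜ[k] (Phi bG l a * Phi bG l' b) = 0 := by
    intro r
    rw [← expand_mul bG sa sb (fun l => Phi bG l a) (fun l => Phi bG l b) r,
      ← harep, ← hbrep]
    exact hsand _
  have hz := double_sum_coords bG hprime hrat sa sb _ hrel
  obtain ⟨l, hl, hal⟩ : ∃ l ∈ sa, Phi bG l a ≠ 0 := by
    by_contra h
    push_neg at h
    exact ha (harep.trans (Finset.sum_eq_zero fun l hl => by rw [h l hl, tmul_zero]))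
  obtain ⟨l', hl', hbl⟩ : ∃ l' ∈ sb, Phi bG l' b ≠ 0 := by
    by_contra h
    push_neg at h
    exact hb (hbrep.trans (Finset.sum_eq_zero fun l hl => by rw [h l hl, tmul_zero]))
  exact mul_ne_zero hal hbl (hz l hl l' hl')

lemma rational_tensor (I : TwoSidedIdeal (R ⊗[k] K))
    (hann : ∀ r : R ⊗[k] K, (∀ x ∈ I, r * x = 0) → r = 0)
    (f : R ⊗[k] K → R ⊗[k] K) (hf : IsBimodOn I f) :
    ∃ c : K, ∀ x ∈ I, f x = ((1 : R) ⊗ₜ[k] c) * x := by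
  classical
  let bG := Module.Basis.ofVectorSpace k R
  have hSprime : IsPrimeRing (R ⊗[k] K) := prime_tensor hprime hrat
  have hnt : Nontrivial (R ⊗[k] K) := hSprime.1
  obtain ⟨a₀, ha₀I, ha₀⟩ : ∃ a ∈ I, a ≠ 0 := by
    by_contra h
    push_neg at h
    have h1 : (1 : R ⊗[k] K) = 0 :=
      hann 1 (fun x hx => by rw [h x hx, mul_zero])
    exact one_ne_zero h1
  have key : ∀ a ∈ I, a ≠ 0 → ∃ c : K, f a = ((1 : R) ⊗ₜ[k] c) * a := by
    intro a haI ha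
    have hsand : ∀ s : R ⊗[k] K, a * s * f a = f a * s * a := by
      intro s
      have h1 : f (a * s * a) = a * s * f a := hf.2.1 (a * s) a haI
      have h2 : f (a * s * a) = f a * s * a := by
        have := hf.2.2 (s * a) a haI
        rwa [← mul_assoc a s a, ← mul_assoc (f a) s a] at this
      rw [← h1, h2]
    obtain ⟨sa, h0a, hrepa⟩ := exists_rep bG a
    obtain ⟨sb, h0b, hrepb⟩ := exists_rep bG (f a)
    set t := sa ∪ sb with htdef
    have hra : a = ∑ l ∈ t, bG l ⊗ₜ[k] Phi bG l a :=
      rep_mono bG h0a hrepa Finset.subset_union_left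
    have hrb : f a = ∑ l ∈ t, bG l ⊗ₜ[k] Phi bG l (f a) :=
      rep_mono bG h0b hrepb Finset.subset_union_right
    have hrel : ∀ r : R, ∑ l ∈ t, ∑ l' ∈ t, (bG l * r * bG l') ⊗ₜ[k]
        (Phi bG l a * Phi bG l' (f a) - Phi bG l (f a) * Phi bG l' a) = 0 := by
      intro r
      have e1 := expand_mul bG t t (fun l => Phi bG l a) (fun l => Phi bG l (f a)) r
      rw [← hra, ← hrb] at e1
      have e2 := expand_mul bG t t (fun l => Phi bG l (f a)) (fun l => Phi bG l a) r
      rw [← hra, ← hrb] at e2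
      calc ∑ l ∈ t, ∑ l' ∈ t, (bG l * r * bG l') ⊗ₜ[k]
            (Phi bG l a * Phi bG l' (f a) - Phi bG l (f a) * Phi bG l' a)
          = ∑ l ∈ t, ∑ l' ∈ t, ((bG l * r * bG l') ⊗ₜ[k] (Phi bG l a * Phi bG l' (f a))
              - (bG l * r * bG l') ⊗ₜ[k] (Phi bG l (f a) * Phi bG l' a)) := by
            exact Finset.sum_congr rfl fun l _ => Finset.sum_congr rfl fun l' _ => by
              rw [TensorProduct.tmul_sub]
        _ = (a * (r ⊗ₜ[k] (1 : K)) * f a) - (f a * (r ⊗ₜ[k] (1 : K)) * a) := by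
            simp only [Finset.sum_sub_distrib]
            rw [e1, e2]
        _ = 0 := by rw [hsand (r ⊗ₜ[k] (1 : K)), sub_self]
    have hz := double_sum_coords bG hprime hrat t t _ hrel
    obtain ⟨l₀, hl₀, hal₀⟩ : ∃ l ∈ t, Phi bG l a ≠ 0 := by
      by_contra h
      push_neg at h
      exact ha (hra.trans (Finset.sum_eq_zero fun l hl => by rw [h l hl, tmul_zero]))
    refine ⟨(Phi bG l₀ a)⁻¹ * Phi bG l₀ (f a), ?_⟩
    have hco : ∀ l ∈ t, Phi bG l (f a)
        = ((Phi bG l₀ a)⁻¹ * Phi bG l₀ (f a)) * Phi bG l a := by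
      intro l hl
      have h4 : Phi bG l₀ a * Phi bG l (f a) = Phi bG l₀ (f a) * Phi bG l a :=
        sub_eq_zero.mp (hz l₀ hl₀ l hl)
      rw [mul_assoc, ← h4, ← mul_assoc, inv_mul_cancel₀ hal₀, one_mul]
    calc f a = ∑ l ∈ t, bG l ⊗ₜ[k] Phi bG l (f a) := hrb
      _ = ∑ l ∈ t, bG l ⊗ₜ[k] (((Phi bG l₀ a)⁻¹ * Phi bG l₀ (f a)) * Phi bG l a) :=
          Finset.sum_congr rfl fun l hl => by rw [hco l hl]
      _ = ((1 : R) ⊗ₜ[k] ((Phi bG l₀ a)⁻¹ * Phi bG l₀ (f a)))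
            * ∑ l ∈ t, bG l ⊗ₜ[k] Phi bG l a := by
          rw [Finset.mul_sum]
          exact Finset.sum_congr rfl fun l _ => by
            rw [Algebra.TensorProduct.tmul_mul_tmul, one_mul]
      _ = ((1 : R) ⊗ₜ[k] ((Phi bG l₀ a)⁻¹ * Phi bG l₀ (f a))) * a := by rw [← hra]
  obtain ⟨c, hc⟩ := key a₀ ha₀I ha₀
  refine ⟨c, fun x hxI => ?_⟩
  by_cases hx : x = 0
  · subst hx
    rw [mul_zero]
    have h0 : f 0 = f 0 + f 0 := by
      have := hf.1 0 I.zero_mem 0 I.zero_mem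
      rwa [add_zero] at this
    have := add_eq_right.mp h0.symm
    exact this
  · obtain ⟨cx, hcx⟩ := key x hxI hx
    have hxy : ∀ s : R ⊗[k] K,
        ((1 : R) ⊗ₜ[k] c) * (a₀ * s * x) = ((1 : R) ⊗ₜ[k] cx) * (a₀ * s * x) := by
      intro s
      have h1 : f (a₀ * s * x) = ((1 : R) ⊗ₜ[k] c) * (a₀ * s * x) := by
        have := hf.2.2 (s * x) a₀ ha₀I
        rw [← mul_assoc a₀ s x, ← mul_assoc (f a₀) s x] at this
        rw [this, hc, mul_assoc, mul_assoc, mul_assoc]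
      have h2 : f (a₀ * s * x) = ((1 : R) ⊗ₜ[k] cx) * (a₀ * s * x) := by
        have h3 := hf.2.1 (a₀ * s) x hxI
        rw [h3, hcx, ← mul_assoc, ← one_tmul_comm cx (a₀ * s), mul_assoc]
      rw [← h1, h2]
    obtain ⟨s, hs⟩ := exists_mid hSprime ha₀ hx
    have hzz : ((1 : R) ⊗ₜ[k] (c - cx)) * (a₀ * s * x) = 0 := by
      rw [TensorProduct.tmul_sub, sub_mul, hxy s, sub_self]
    have hccx : c = cx := by
      by_contra hcc
      exact hs (one_tmul_cancel (sub_ne_zero.2 hcc) hzz)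
    rw [hcx, hccx]

end main

end RatExt

/-- Let `R` be a prime `k`-algebra which is rational over `k` (its extended centroid is
`k`: every bimodule map on an ideal with zero left annihilator is a scalar in `k`), and
let `K/k` be a field extension. Then `R ⊗[k] K` is a prime `K`-algebra which is
rational over `K`. -/
theorem rational_scalar_extension
    {k : Type*} [Field k] {R : Type*} [Ring R] [Algebra k R]
    {K : Type*} [Field K] [Algebra k K]
    (hprime : IsPrimeRing R)
    (hrat : ∀ I : TwoSidedIdeal R, (∀ r : R, (∀ x ∈ I, r * x = 0) → r = 0) →
      ∀ f : R → R, IsBimodOn I f → ∃ c : k, ∀ x ∈ I, f x = c • x) :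
    IsPrimeRing (R ⊗[k] K) ∧
      ∀ I : TwoSidedIdeal (R ⊗[k] K),
        (∀ r : R ⊗[k] K, (∀ x ∈ I, r * x = 0) → r = 0) →
        ∀ f : R ⊗[k] K → R ⊗[k] K, IsBimodOn I f →
          ∃ c : K, ∀ x ∈ I, f x = ((1 : R) ⊗ₜ[k] c) * x :=
  ⟨RatExt.prime_tensor hprime hrat, fun I hann f hf =>
    RatExt.rational_tensor hprime hrat I hann f hf⟩
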